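/- (Proposition on symmetry of global directed closure coefficients.) In any finite simple directed graph G: if Σ_{u∈V} W_ii(u) > 0 then H_ii^i = H_oo^o and H_ii^o = H_oo^i; if Σ_{u∈V} W_io(u) > 0 then H_io^i = H_io^o; and if Σ_{u∈V} W_oi(u) > 0 then H_oi^i = H_oi^o. -/

import Mathlib

open Finset

/-- Direction-indexed edge predicate relative to a base node `a`: for direction `x`,
`dirE E x a b` holds if there is an edge between `a` and `b` of direction `x` with respect
to `a`; `x = false` stands for `i` (incoming, i.e. the edge `(b, a)`) and `x = true` stands
for `o` (outgoing, i.e. the edge `(a, b)`). -/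
def dirE {V : Type*} (E : V → V → Prop) (x : Bool) (a b : V) : Prop :=
  if x then E a b else E b a

instance {V : Type*} (E : V → V → Prop) [DecidableRel E] (x : Bool) :
    DecidableRel (dirE E x) := fun a b => by
  unfold dirE; infer_instance

/-- `wedgeCount E x y u`: the number of xy-type directed wedges `(u, v, w)` with head `u`:
`u, v, w` pairwise distinct, the first edge has direction `x` with respect to the head `u`,
and the second edge has direction `y` with respect to the center `v`
(`false` = i, `true` = o).  The pair `p` encodes `(v, w) = (center, tail)`. -/
def wedgeCount {V : Type*} [Fintype V] [DecidableEq V] (E : V → V → Prop) [DecidableRel E]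
    (x y : Bool) (u : V) : ℕ :=
  (Finset.univ.filter fun p : V × V =>
    u ≠ p.1 ∧ u ≠ p.2 ∧ p.1 ≠ p.2 ∧ dirE E x u p.1 ∧ dirE E y p.1 p.2).card

/-- `closedWedgeCount E x y z u`: the number of z-closed xy-type wedges with head `u`, i.e.
those xy-type wedges `(u, v, w)` that also have a closing edge of direction `z` with respect
to the head `u` (`z = false`: the edge `(w, u)`; `z = true`: the edge `(u, w)`). -/
def closedWedgeCount {V : Type*} [Fintype V] [DecidableEq V] (E : V → V → Prop) [DecidableRel E]
    (x y z : Bool) (u : V) : ℕ :=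
  (Finset.univ.filter fun p : V × V =>
    u ≠ p.1 ∧ u ≠ p.2 ∧ p.1 ≠ p.2 ∧ dirE E x u p.1 ∧ dirE E y p.1 p.2 ∧ dirE E z u p.2).card


section Aux
variable {V : Type*} [Fintype V] [DecidableEq V]

lemma tripleSum (Q : V → V × V → Prop) [∀ u, DecidablePred (Q u)] :
    ∑ u : V, (Finset.univ.filter (Q u)).card
      = (Finset.univ.filter fun t : V × V × V => Q t.1 t.2).card := by
  simp only [Finset.card_filter, Fintype.sum_prod_type]

lemma cardSwap (P : V × V × V → Prop) [DecidablePred P] :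
    (Finset.univ.filter P).card
      = (Finset.univ.filter fun t : V × V × V => P (t.2.2, t.2.1, t.1)).card := by
  apply Finset.card_nbij' (i := fun t => (t.2.2, t.2.1, t.1)) (j := fun t => (t.2.2, t.2.1, t.1)) <;>
    simp [Set.MapsTo, Set.LeftInvOn, Set.RightInvOn]

variable (E : V → V → Prop) [DecidableRel E]

lemma wedge_swap (x y : Bool) :
    ∑ u : V, wedgeCount E x y u = ∑ u : V, wedgeCount E (!y) (!x) u := by
  unfold wedgeCount
  rw [tripleSum, tripleSum, cardSwap]
  refine congrArg Finset.card ?_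
  ext t
  obtain ⟨u, v, w⟩ := t
  simp only [Finset.mem_filter, Finset.mem_univ, true_and]
  simp only [dirE]
  cases x <;> cases y <;>
    · simp only [Bool.not_true, Bool.not_false, ite_false, ite_true,
        Bool.false_eq_true, if_false, if_true]
      constructor <;> rintro ⟨h1, h2, h3, h4, h5⟩ <;>
        exact ⟨h3.symm, h2.symm, h1.symm, h5, h4⟩

lemma closed_swap (x y z : Bool) :
    ∑ u : V, closedWedgeCount E x y z u = ∑ u : V, closedWedgeCount E (!y) (!x) (!z) u := by
  unfold closedWedgeCount
  rw [tripleSum, tripleSum, cardSwap]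
  refine congrArg Finset.card ?_
  ext t
  obtain ⟨u, v, w⟩ := t
  simp only [Finset.mem_filter, Finset.mem_univ, true_and]
  simp only [dirE]
  cases x <;> cases y <;> cases z <;>
    · simp only [Bool.not_true, Bool.not_false, ite_false, ite_true,
        Bool.false_eq_true, if_false, if_true]
      constructor <;> rintro ⟨h1, h2, h3, h4, h5, h6⟩ <;>
        exact ⟨h3.symm, h2.symm, h1.symm, h5, h4, h6⟩

end Aux

/-- Symmetry of the global directed closure coefficients
`H_xy^z = (Σ_u W_xy^z(u)) / (Σ_u W_xy(u))`:
whenever defined, `H_ii^i = H_oo^o`, `H_ii^o = H_oo^i`, `H_io^i = H_io^o`, `H_oi^i = H_oi^o`. -/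
theorem global_closure_coefficient_symmetry {V : Type*} [Fintype V] [DecidableEq V]
    (E : V → V → Prop) [DecidableRel E] (hirr : ∀ v, ¬ E v v) :
    (0 < ∑ u : V, wedgeCount E false false u →
      ((∑ u : V, closedWedgeCount E false false false u : ℚ) /
          (∑ u : V, wedgeCount E false false u) =
        (∑ u : V, closedWedgeCount E true true true u : ℚ) /
          (∑ u : V, wedgeCount E true true u) ∧
       (∑ u : V, closedWedgeCount E false false true u : ℚ) /
          (∑ u : V, wedgeCount E false false u) =
        (∑ u : V, closedWedgeCount E true true false u : ℚ) /
          (∑ u : V, wedgeCount E true true u))) ∧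
    (0 < ∑ u : V, wedgeCount E false true u →
      (∑ u : V, closedWedgeCount E false true false u : ℚ) /
          (∑ u : V, wedgeCount E false true u) =
        (∑ u : V, closedWedgeCount E false true true u : ℚ) /
          (∑ u : V, wedgeCount E false true u)) ∧
    (0 < ∑ u : V, wedgeCount E true false u →
      (∑ u : V, closedWedgeCount E true false false u : ℚ) /
          (∑ u : V, wedgeCount E true false u) =
        (∑ u : V, closedWedgeCount E true false true u : ℚ) /
          (∑ u : V, wedgeCount E true false u)) := by
  have hc : ∀ x y z : Bool,
      (∑ u : V, (closedWedgeCount E x y z u : ℚ))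
        = ∑ u : V, (closedWedgeCount E (!y) (!x) (!z) u : ℚ) := by
    intro x y z; exact_mod_cast congrArg (Nat.cast (R := ℚ)) (closed_swap E x y z)
  have hw : ((∑ u : V, wedgeCount E false false u : ℕ) : ℚ)
      = ((∑ u : V, wedgeCount E true true u : ℕ) : ℚ) := by
    exact_mod_cast congrArg (Nat.cast (R := ℚ)) (wedge_swap E false false)
  refine ⟨fun _ => ⟨?_, ?_⟩, fun _ => ?_, fun _ => ?_⟩
  · rw [hw, hc false false false]; simp
  · rw [hw, hc false false true]; simp
  · rw [hc false true false]; simp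
  · rw [hc true false false]; simp
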